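/- Let a, b, c be complex numbers with c ≠ 2, c ≠ 1 + b, c ≠ a + 1, with Re(c + (2c − 3 − a + ab − b)/(c − 2) − 2 − a − b) > 0, and with neither c nor (2c − 3 − a + ab − b)/(c − 2) a nonpositive integer. Then ₃F₂(2, a, b; c, (2c − 3 − a + ab − b)/(c − 2); 1) = −(c − 1)(c + ab − b − a − 1) / ((c − 1 − b)(a + 1 − c)). -/

import Mathlib

open Complex Finset Filter Topology

lemma pochProd (x : ℂ) (n : ℕ) : (ascPochhammer ℂ n).eval x = ∏ j ∈ range n, (x + j) := by
  induction n with
  | zero => simp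
  | succ n ih => rw [ascPochhammer_succ_right, prod_range_succ, ← ih]; simp

lemma pochTwo (n : ℕ) : (ascPochhammer ℂ n).eval 2 = ((n+1).factorial : ℂ) := by
  induction n with
  | zero => simp
  | succ n ih =>
    rw [ascPochhammer_succ_right, Polynomial.eval_mul, ih]
    push_cast [Nat.factorial_succ]
    simp; ring

lemma pochNe {x : ℂ} (hx : ∀ m : ℕ, x ≠ -(m : ℂ)) (n : ℕ) :
    (ascPochhammer ℂ n).eval x ≠ 0 := by
  rw [pochProd]
  refine Finset.prod_ne_zero_iff.2 fun j _ h => hx j ?_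
  linear_combination h

lemma pochSucc (x : ℂ) (n : ℕ) :
    (ascPochhammer ℂ (n+1)).eval x = (ascPochhammer ℂ n).eval x * (x + n) := by
  rw [ascPochhammer_succ_right]; simp

lemma tele (a b c e s x y u v K : ℂ) (hu : u ≠ 0) (hv : v ≠ 0)
    (hcu : c + K ≠ 0) (hev : e + K ≠ 0) (hs : s ≠ 0)
    (key : (K+c-1)*(K+e-1) - (K+a)*(K+b) = (K+1)*s) :
    (K+1) * (x*y/(u*v)) =
      x*y/(u*v) * ((K+c-1)*(K+e-1)) / s
      - (x*(a+K))*(y*(b+K))/((u*(c+K))*(v*(e+K))) * (((K+1)+c-1)*((K+1)+e-1)) / s := by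
  have h1 : (x*(a+K))*(y*(b+K))/((u*(c+K))*(v*(e+K))) * (((K+1)+c-1)*((K+1)+e-1)) / s
      = x*y/(u*v) * ((K+a)*(K+b)) / s := by
    rw [div_mul_eq_mul_div, div_div, div_mul_eq_mul_div, div_div,
      div_eq_div_iff
        (mul_ne_zero (mul_ne_zero (mul_ne_zero hu hcu) (mul_ne_zero hv hev)) hs)
        (mul_ne_zero (mul_ne_zero hu hv) hs)]
    ring
  rw [h1]
  have h2 : x*y/(u*v) * ((K+c-1)*(K+e-1)) / s - x*y/(u*v) * ((K+a)*(K+b)) / s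
      = x*y/(u*v) * (((K+c-1)*(K+e-1) - (K+a)*(K+b)) / s) := by ring
  rw [h2, key, mul_div_cancel_right₀ _ hs]
  ring

lemma Rg (a b c e : ℂ) (m : ℕ) (hm : 1 ≤ m)
    (hP : (∏ j ∈ range (m+1), (a+j)) ≠ 0) (hQ : (∏ j ∈ range (m+1), (b+j)) ≠ 0)
    (hU : (∏ j ∈ range (m+1), (c+j)) ≠ 0) (hV : (∏ j ∈ range (m+1), (e+j)) ≠ 0) :
    (∏ j ∈ range (m+1), (a+j)) * (∏ j ∈ range (m+1), (b+j)) /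
      ((∏ j ∈ range (m+1), (c+j)) * (∏ j ∈ range (m+1), (e+j)))
    = (m:ℂ)^(a+b-c-e) *
      (Complex.GammaSeq c m * Complex.GammaSeq e m /
        (Complex.GammaSeq a m * Complex.GammaSeq b m)) := by
  have hx : (m:ℂ) ≠ 0 := Nat.cast_ne_zero.2 (by omega)
  have hf : ((m.factorial : ℕ):ℂ) ≠ 0 := Nat.cast_ne_zero.2 m.factorial_ne_zero
  have hxz : ∀ z : ℂ, (m:ℂ) ^ z ≠ 0 := fun z h => hx ((cpow_eq_zero_iff _ _).1 h).1
  set P := ∏ j ∈ range (m+1), (a+j)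
  set Q := ∏ j ∈ range (m+1), (b+j)
  set U := ∏ j ∈ range (m+1), (c+j)
  set V := ∏ j ∈ range (m+1), (e+j)
  set F : ℂ := ((m.factorial : ℕ):ℂ)
  have hpow : (m:ℂ)^(a+b-c-e) * ((m:ℂ)^c * (m:ℂ)^e) = (m:ℂ)^a * (m:ℂ)^b := by
    rw [← cpow_add _ _ hx, ← cpow_add _ _ hx, ← cpow_add _ _ hx]
    congr 1
    ring
  have hGa : Complex.GammaSeq a m = (m:ℂ)^a * F / P := rfl
  have hGb : Complex.GammaSeq b m = (m:ℂ)^b * F / Q := rfl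
  have hGc : Complex.GammaSeq c m = (m:ℂ)^c * F / U := rfl
  have hGe : Complex.GammaSeq e m = (m:ℂ)^e * F / V := rfl
  have hnum : Complex.GammaSeq a m * Complex.GammaSeq b m * (P * Q)
      = (m:ℂ)^a * (m:ℂ)^b * F * F := by
    rw [hGa, hGb, div_mul_div_comm, div_mul_cancel₀ _ (mul_ne_zero hP hQ)]
    ring
  have hden : Complex.GammaSeq c m * Complex.GammaSeq e m * (U * V)
      = (m:ℂ)^c * (m:ℂ)^e * F * F := by
    rw [hGc, hGe, div_mul_div_comm, div_mul_cancel₀ _ (mul_ne_zero hU hV)]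
    ring
  have hGab : Complex.GammaSeq a m * Complex.GammaSeq b m ≠ 0 := by
    intro h
    apply hxz a
    have := hnum
    rw [h, zero_mul] at this
    have h2 : (m:ℂ)^a * ((m:ℂ)^b * F * F) = 0 := by linear_combination -this
    rcases mul_eq_zero.1 h2 with h3 | h3
    · exact h3
    · exact absurd h3 (mul_ne_zero (mul_ne_zero (hxz b) hf) hf)
  rw [← mul_div_assoc, div_eq_div_iff (mul_ne_zero hU hV) hGab]
  apply mul_left_cancel₀ (mul_ne_zero (mul_ne_zero hU hV) (mul_ne_zero hP hQ))
  linear_combination (U*V*(P*Q))*hnum - (P*Q*(U*V)*((m:ℂ)^(a+b-c-e)))*hden -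
    (U*V*(P*Q)*F^2)*hpow

lemma rpow_shift_bound {σ : ℝ} (hσ : 0 < σ) (m : ℕ) (hm : 1 ≤ m) :
    ((m:ℝ))^(-(2+σ)) ≤ 2^(2+σ) * (((m+1:ℕ)):ℝ)^(-(2+σ)) := by
  have hM : (1:ℝ) ≤ (m:ℝ) := by exact_mod_cast hm
  have hp : (0:ℝ) < 2 + σ := by linarith
  have hMp : (0:ℝ) < (m:ℝ)^(2+σ) := Real.rpow_pos_of_pos (by linarith) _
  have hM1 : (0:ℝ) < ((m:ℝ)+1) := by linarith
  have hM1p : (0:ℝ) < ((m:ℝ)+1)^(2+σ) := Real.rpow_pos_of_pos hM1 _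
  have h1 : ((m:ℝ)+1)^(2+σ) ≤ (2*(m:ℝ))^(2+σ) :=
    Real.rpow_le_rpow (by linarith) (by linarith) hp.le
  have h2 : (2*(m:ℝ))^(2+σ) = 2^(2+σ) * (m:ℝ)^(2+σ) :=
    Real.mul_rpow (by norm_num) (by linarith)
  have key : ((m:ℝ)+1)^(2+σ) ≤ 2^(2+σ) * (m:ℝ)^(2+σ) := h1.trans_eq h2
  have hcast : (((m+1:ℕ)):ℝ) = (m:ℝ)+1 := by push_cast; ring
  rw [hcast, Real.rpow_neg (by linarith), Real.rpow_neg hM1.le]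
  calc ((m:ℝ)^(2+σ))⁻¹ = ((m:ℝ)+1)^(2+σ) / (((m:ℝ)+1)^(2+σ) * (m:ℝ)^(2+σ)) := by
        field_simp
    _ ≤ (2^(2+σ) * (m:ℝ)^(2+σ)) / (((m:ℝ)+1)^(2+σ) * (m:ℝ)^(2+σ)) := by gcongr
    _ = 2^(2+σ) * (((m:ℝ)+1)^(2+σ))⁻¹ := by field_simp

/-- The generalized hypergeometric series ₃F₂(a₁,a₂,a₃; b₁,b₂; 1) over ℂ. -/
noncomputable def hyp3F2 (a₁ a₂ a₃ b₁ b₂ : ℂ) : ℂ :=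
  ∑' k : ℕ,
    ((ascPochhammer ℂ k).eval a₁ * (ascPochhammer ℂ k).eval a₂ * (ascPochhammer ℂ k).eval a₃) /
    ((ascPochhammer ℂ k).eval b₁ * (ascPochhammer ℂ k).eval b₂ * (Nat.factorial k : ℂ))

/-- `x` is not a nonpositive integer (equivalently, not a pole of Γ). -/
def NotNonposInt (x : ℂ) : Prop := ∀ m : ℕ, x ≠ -(m : ℂ)

theorem stmt11 (a b c : ℂ) (hc2 : c ≠ 2) (hcb : c ≠ 1 + b) (hca : c ≠ a + 1)
    (hconv : (c + (2*c - 3 - a + a*b - b)/(c - 2) - 2 - a - b).re > 0)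
    (hb1 : NotNonposInt c) (hb2 : NotNonposInt ((2*c - 3 - a + a*b - b)/(c - 2))) :
    hyp3F2 2 a b c ((2*c - 3 - a + a*b - b)/(c - 2)) =
      -((c - 1) * (c + a*b - b - a - 1)) / ((c - 1 - b) * (a + 1 - c)) := by
  have hc2' : c - 2 ≠ 0 := sub_ne_zero.mpr hc2
  have hcb' : c - 1 - b ≠ 0 := fun h => hcb (by linear_combination h)
  have hca' : a + 1 - c ≠ 0 := fun h => hca (by linear_combination -h)
  set e : ℂ := (2*c - 3 - a + a*b - b)/(c - 2) with he
  set s : ℂ := c + e - 2 - a - b with hs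
  have hconv' : 0 < s.re := hconv
  have hs0 : s ≠ 0 := fun h => by rw [h] at hconv'; simp at hconv'
  have hprop : (c-1)*(e-1) - a*b = s := by
    rw [hs, he]; field_simp; ring
  set pa : ℕ → ℂ := fun n => (ascPochhammer ℂ n).eval a with hpa
  set pb : ℕ → ℂ := fun n => (ascPochhammer ℂ n).eval b with hpb
  set pc : ℕ → ℂ := fun n => (ascPochhammer ℂ n).eval c with hpc
  set pe : ℕ → ℂ := fun n => (ascPochhammer ℂ n).eval e with hpe
  have hpc0 : ∀ n, pc n ≠ 0 := fun n => pochNe hb1 n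
  have hpe0 : ∀ n, pe n ≠ 0 := fun n => pochNe hb2 n
  have hcj : ∀ n : ℕ, c + n ≠ 0 := fun n h => hb1 n (by linear_combination h)
  have hej : ∀ n : ℕ, e + n ≠ 0 := fun n h => hb2 n (by linear_combination h)
  set R : ℕ → ℂ := fun n => pa n * pb n / (pc n * pe n) with hR
  set A : ℕ → ℂ := fun n => R n * (((n:ℂ)+c-1)*((n:ℂ)+e-1)) / s with hA
  set term : ℕ → ℂ := fun k =>
    ((ascPochhammer ℂ k).eval 2 * pa k * pb k) / (pc k * pe k * (Nat.factorial k : ℂ)) with hterm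
  have hteq : ∀ k, term k = ((k:ℂ)+1) * R k := by
    intro k
    have hf : (Nat.factorial k : ℂ) ≠ 0 := Nat.cast_ne_zero.2 k.factorial_ne_zero
    have h1 : term k = (((k:ℂ)+1) * (pa k * pb k)) * (k.factorial : ℂ)
        / ((pc k * pe k) * (k.factorial : ℂ)) := by
      rw [hterm]
      simp only [pochTwo]
      push_cast [Nat.factorial_succ]
      ring
    rw [h1, mul_div_mul_right _ _ hf, hR, mul_div_assoc]
  have hkey : ∀ k : ℕ, ((k:ℂ)+c-1)*((k:ℂ)+e-1) - ((k:ℂ)+a)*((k:ℂ)+b) = ((k:ℂ)+1)*s := by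
    intro k
    linear_combination hprop - (k:ℂ) * hs
  have htele : ∀ k : ℕ, term k = A k - A (k+1) := by
    intro k
    rw [hteq k, hA]
    simp only [hR, hpa, hpb, hpc, hpe, pochSucc, Nat.cast_add, Nat.cast_one]
    exact tele a b c e s _ _ _ _ _ (hpc0 k) (hpe0 k) (hcj k) (hej k) hs0 (hkey k)
  have hA0 : A 0 = -((c-1) * (c+a*b-b-a-1)) / ((c-1-b) * (a+1-c)) := by
    have h0 : A 0 = (c-1)*(e-1)/s := by
      rw [hA, hR, hpa, hpb, hpc, hpe]
      simp [ascPochhammer_zero]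
    rw [h0, div_eq_div_iff hs0 (mul_ne_zero hcb' hca'), hs, he]
    field_simp
    ring
  -- the key bound
  have hw : (a+b-c-e).re = -(2+s.re) := by
    have h : a+b-c-e = -2-s := by rw [hs]; ring
    rw [h]
    simp [Complex.sub_re]
    ring
  have hbound : ∃ C : ℝ, 0 < C ∧ ∀ᶠ n : ℕ in atTop, ‖R n‖ ≤ C * (n:ℝ)^(-(2+s.re)) := by
    by_cases hd : (∃ m : ℕ, a = -(m:ℂ)) ∨ (∃ m : ℕ, b = -(m:ℂ))
    · refine ⟨1, one_pos, ?_⟩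
      have hz : ∀ᶠ n : ℕ in atTop, R n = 0 := by
        obtain (⟨m, hm⟩ | ⟨m, hm⟩) := hd
        · filter_upwards [eventually_ge_atTop (m+1)] with n hn
          have hz0 : pa n = 0 := by
            simp only [hpa, pochProd]
            exact Finset.prod_eq_zero (i := m) (mem_range.2 (by omega)) (by rw [hm]; ring)
          simp only [hR]
          rw [hz0, zero_mul, zero_div]
        · filter_upwards [eventually_ge_atTop (m+1)] with n hn
          have hz0 : pb n = 0 := by
            simp only [hpb, pochProd]
            exact Finset.prod_eq_zero (i := m) (mem_range.2 (by omega)) (by rw [hm]; ring)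
          simp only [hR]
          rw [hz0, mul_zero, zero_div]
      filter_upwards [hz] with n h1
      rw [h1, norm_zero]
      positivity
    · push_neg at hd
      obtain ⟨ha', hb'⟩ := hd
      have hpa0 : ∀ n, pa n ≠ 0 := fun n => pochNe ha' n
      have hpb0 : ∀ n, pb n ≠ 0 := fun n => pochNe hb' n
      set g : ℕ → ℂ := fun m => Complex.GammaSeq c m * Complex.GammaSeq e m /
        (Complex.GammaSeq a m * Complex.GammaSeq b m) with hg
      set L : ℂ := Complex.Gamma c * Complex.Gamma e / (Complex.Gamma a * Complex.Gamma b)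
        with hL
      have hgl : Tendsto g atTop (𝓝 L) :=
        ((Complex.GammaSeq_tendsto_Gamma c).mul (Complex.GammaSeq_tendsto_Gamma e)).div
          ((Complex.GammaSeq_tendsto_Gamma a).mul (Complex.GammaSeq_tendsto_Gamma b))
          (mul_ne_zero (Complex.Gamma_ne_zero ha') (Complex.Gamma_ne_zero hb'))
      have hev : ∀ᶠ m : ℕ in atTop, ‖g m‖ < ‖L‖ + 1 :=
        hgl.norm.eventually_lt_const (lt_add_one _)
      obtain ⟨N, hN⟩ := eventually_atTop.1 hev
      refine ⟨(2:ℝ)^(2+s.re) * (‖L‖+1), by positivity, ?_⟩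
      rw [eventually_atTop]
      refine ⟨N + 2, fun n hn => ?_⟩
      obtain ⟨m, rfl⟩ : ∃ m, n = m + 1 := ⟨n-1, by omega⟩
      have hm1 : 1 ≤ m := by omega
      have hRm : R (m+1) = (m:ℂ)^(a+b-c-e) * g m := by
        rw [hR, hg, hpa, hpb, hpc, hpe]
        simp only [pochProd]
        exact Rg a b c e m hm1
          (by rw [← pochProd]; exact hpa0 (m+1)) (by rw [← pochProd]; exact hpb0 (m+1))
          (by rw [← pochProd]; exact hpc0 (m+1)) (by rw [← pochProd]; exact hpe0 (m+1))
      have hmpos : (0:ℝ) < (m:ℝ) := by exact_mod_cast Nat.lt_of_lt_of_le Nat.zero_lt_one hm1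
      have hnm : ‖R (m+1)‖ = (m:ℝ)^(-(2+s.re)) * ‖g m‖ := by
        rw [hRm, norm_mul]
        congr 1
        rw [← Complex.ofReal_natCast,
          Complex.norm_cpow_eq_rpow_re_of_pos hmpos, hw]
      calc ‖R (m+1)‖ = (m:ℝ)^(-(2+s.re)) * ‖g m‖ := hnm
        _ ≤ (m:ℝ)^(-(2+s.re)) * (‖L‖+1) := by
            have := (hN m (by omega)).le
            gcongr
            try positivity
        _ ≤ (2^(2+s.re) * (((m+1:ℕ)):ℝ)^(-(2+s.re))) * (‖L‖+1) := by
            have := rpow_shift_bound hconv' m hm1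
            gcongr
            try positivity
        _ = 2^(2+s.re) * (‖L‖+1) * (((m+1:ℕ)):ℝ)^(-(2+s.re)) := by ring
  obtain ⟨C, hC, hCb⟩ := hbound
  -- A tends to zero
  have hAlim : Tendsto A atTop (𝓝 0) := by
    apply squeeze_zero_norm' (a := fun n : ℕ => (4*C/‖s‖) * (n:ℝ)^(-s.re))
    · filter_upwards [hCb, tendsto_natCast_atTop_atTop.eventually_ge_atTop ‖c-1‖,
        tendsto_natCast_atTop_atTop.eventually_ge_atTop ‖e-1‖,
        eventually_ge_atTop 1] with n h1 h2 h3 h4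
      have hn1 : (1:ℝ) ≤ (n:ℝ) := by exact_mod_cast h4
      have hnpos : (0:ℝ) < (n:ℝ) := by linarith
      have hb1' : ‖(n:ℂ)+c-1‖ ≤ 2*(n:ℝ) := by
        calc ‖(n:ℂ)+c-1‖ = ‖(n:ℂ)+(c-1)‖ := by ring_nf
          _ ≤ ‖(n:ℂ)‖ + ‖c-1‖ := norm_add_le _ _
          _ = (n:ℝ) + ‖c-1‖ := by rw [Complex.norm_natCast]
          _ ≤ 2*(n:ℝ) := by linarith
      have hb2' : ‖(n:ℂ)+e-1‖ ≤ 2*(n:ℝ) := by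
        calc ‖(n:ℂ)+e-1‖ = ‖(n:ℂ)+(e-1)‖ := by ring_nf
          _ ≤ ‖(n:ℂ)‖ + ‖e-1‖ := norm_add_le _ _
          _ = (n:ℝ) + ‖e-1‖ := by rw [Complex.norm_natCast]
          _ ≤ 2*(n:ℝ) := by linarith
      have hAn : ‖A n‖ = ‖R n‖ * (‖(n:ℂ)+c-1‖ * ‖(n:ℂ)+e-1‖) / ‖s‖ := by
        rw [hA, norm_div, norm_mul, norm_mul]
      rw [hAn]
      have hexp : (n:ℝ)^(-(2+s.re)) * ((n:ℝ) * (n:ℝ)) = (n:ℝ)^(-s.re) := by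
        rw [show (n:ℝ) * (n:ℝ) = (n:ℝ)^((2:ℝ)) by
          rw [show ((2:ℝ)) = ((2:ℕ):ℝ) by norm_num, Real.rpow_natCast]; ring]
        rw [← Real.rpow_add hnpos]
        norm_num
      calc ‖R n‖ * (‖(n:ℂ)+c-1‖ * ‖(n:ℂ)+e-1‖) / ‖s‖
          ≤ (C * (n:ℝ)^(-(2+s.re))) * ((2*(n:ℝ)) * (2*(n:ℝ))) / ‖s‖ := by
            gcongr
            try exact norm_nonneg _
        _ = (4*C/‖s‖) * ((n:ℝ)^(-(2+s.re)) * ((n:ℝ) * (n:ℝ))) := by ring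
        _ = (4*C/‖s‖) * (n:ℝ)^(-s.re) := by rw [hexp]
    · have h0 : Tendsto (fun n : ℕ => (n:ℝ)^(-s.re)) atTop (𝓝 0) :=
        (tendsto_rpow_neg_atTop hconv').comp tendsto_natCast_atTop_atTop
      have := h0.const_mul (4*C/‖s‖)
      simpa using this
  -- summability
  have hsumm : Summable term := by
    apply Summable.of_norm_bounded_eventually_nat (g := fun n : ℕ => (2*C) * (n:ℝ)^(-(1+s.re)))
    · exact ((Real.summable_nat_rpow.2 (by linarith)).mul_left _)
    · filter_upwards [hCb, eventually_ge_atTop 1] with n h1 h4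
      have hn1 : (1:ℝ) ≤ (n:ℝ) := by exact_mod_cast h4
      have hnpos : (0:ℝ) < (n:ℝ) := by linarith
      have hnorm1 : ‖(n:ℂ)+1‖ ≤ 2*(n:ℝ) := by
        rw [show ((n:ℂ)+1) = (((n+1:ℕ)):ℂ) by push_cast; ring, Complex.norm_natCast]
        push_cast
        linarith
      have hexp : (n:ℝ) * (n:ℝ)^(-(2+s.re)) = (n:ℝ)^(-(1+s.re)) := by
        nth_rewrite 1 [show (n:ℝ) = (n:ℝ)^((1:ℝ)) by rw [Real.rpow_one]]
        rw [← Real.rpow_add hnpos]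
        congr 1
        ring
      calc ‖term n‖ = ‖(n:ℂ)+1‖ * ‖R n‖ := by rw [hteq n, norm_mul]
        _ ≤ (2*(n:ℝ)) * (C * (n:ℝ)^(-(2+s.re))) := by
            gcongr
            try exact norm_nonneg _
        _ = (2*C) * ((n:ℝ) * (n:ℝ)^(-(2+s.re))) := by ring
        _ = (2*C) * (n:ℝ)^(-(1+s.re)) := by rw [hexp]
  -- conclusion
  have hps : ∀ n, ∑ i ∈ range n, term i = A 0 - A n := by
    intro n
    rw [Finset.sum_congr rfl fun i _ => htele i, Finset.sum_range_sub' A n]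
  have h1 : Tendsto (fun n => ∑ i ∈ range n, term i) atTop (𝓝 (A 0)) := by
    simp only [hps]
    simpa using tendsto_const_nhds.sub hAlim
  have h2 : Tendsto (fun n => ∑ i ∈ range n, term i) atTop (𝓝 (∑' k, term k)) :=
    hsumm.hasSum.tendsto_sum_nat
  have hfin : (∑' k, term k) = A 0 := tendsto_nhds_unique h2 h1
  have hH : hyp3F2 2 a b c e = ∑' k, term k := rfl
  rw [hH, hfin, hA0]
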